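/- Let p ∈ (0,1] and let a, c ∈ ℝ. Then lim_{K→∞} Σ_{ℓ=0}^{K} C(K,ℓ)·p^ℓ·(1−p)^(K−ℓ)·exp(−(a·ℓ + c)/K) = exp(−a·p). -/

import Mathlib

open Filter

/-- Key limit of Theorem 4: the binomial expectation of `exp(−(aℓ+c)/K)`
converges to `exp(−ap)` as `K → ∞`. -/
theorem stmt_7 (p : ℝ) (hp : p ∈ Set.Ioc (0 : ℝ) 1) (a c : ℝ) :
    Tendsto (fun K : ℕ => ∑ ℓ ∈ Finset.range (K + 1),
        (K.choose ℓ : ℝ) * p ^ ℓ * (1 - p) ^ (K - ℓ) *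
          Real.exp (-(a * ℓ + c) / K))
      atTop (nhds (Real.exp (-(a * p)))) := by
  obtain ⟨hp0, hp1⟩ := hp
  set h : ℝ → ℝ := fun x => 1 - p + p * Real.exp (-(a * x)) with hh
  have hpos : ∀ x : ℝ, 0 < h x := by
    intro x
    have : 0 < p * Real.exp (-(a * x)) := mul_pos hp0 (Real.exp_pos _)
    have h1p : (0:ℝ) ≤ 1 - p := by linarith
    simp only [hh]; linarith
  -- Step 1: rewrite the sum via the binomial theorem, for K ≥ 1.
  have hsum : ∀ K : ℕ, 1 ≤ K →
      (∑ ℓ ∈ Finset.range (K + 1),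
        (K.choose ℓ : ℝ) * p ^ ℓ * (1 - p) ^ (K - ℓ) *
          Real.exp (-(a * ℓ + c) / K))
      = Real.exp (-c / K) * (h ((K : ℝ)⁻¹)) ^ K := by
    intro K hK
    have hK0 : (K : ℝ) ≠ 0 := Nat.cast_ne_zero.mpr (by omega)
    have hbin := add_pow (p * Real.exp (-a / K)) (1 - p) K
    have : h ((K : ℝ)⁻¹) ^ K = ∑ ℓ ∈ Finset.range (K + 1),
        (p * Real.exp (-a / K)) ^ ℓ * (1 - p) ^ (K - ℓ) * (K.choose ℓ : ℝ) := by
      rw [← hbin]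
      have : -(a * (K : ℝ)⁻¹) = -a / K := by ring
      simp only [hh, this]
      ring_nf
    rw [this, Finset.mul_sum]
    apply Finset.sum_congr rfl
    intro ℓ hℓ
    have hexp : Real.exp (-(a * ℓ + c) / K)
        = Real.exp (-c / K) * Real.exp (-a / K) ^ ℓ := by
      rw [← Real.exp_nat_mul, ← Real.exp_add]
      congr 1
      field_simp
      ring
    rw [hexp, mul_pow]
    ring
  -- Step 2: the K * log (h (1/K)) limit via the derivative of log ∘ h at 0.
  have h1 : HasDerivAt (fun x : ℝ => -(a * x)) (-a) 0 := by
    simpa using ((hasDerivAt_id (0:ℝ)).const_mul a).fun_neg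
  have h2 : HasDerivAt (fun x : ℝ => Real.exp (-(a * x))) (-a) 0 := by
    simpa using h1.exp
  have h3 : HasDerivAt h (-(a * p)) 0 := by
    have := ((h2.const_mul p).const_add (1 - p))
    simpa [hh, mul_comm, mul_left_comm] using this
  have hh0 : h 0 = 1 := by simp [hh]
  have h4 : HasDerivAt (fun x => Real.log (h x)) (-(a * p)) 0 := by
    have := h3.log (by rw [hh0]; norm_num)
    simpa [hh0] using this
  rw [hasDerivAt_iff_tendsto_slope] at h4
  have hinv : Tendsto (fun K : ℕ => ((K : ℝ))⁻¹) atTop (nhdsWithin 0 {(0:ℝ)}ᶜ) := by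
    apply tendsto_nhdsWithin_of_tendsto_nhds_of_eventually_within
    · exact tendsto_inv_atTop_nhds_zero_nat
    · filter_upwards [eventually_ge_atTop 1] with K hK
      have : (K : ℝ) ≠ 0 := Nat.cast_ne_zero.mpr (by omega)
      simp [this]
  have h5 : Tendsto (fun K : ℕ => slope (fun x => Real.log (h x)) 0 ((K : ℝ)⁻¹))
      atTop (nhds (-(a * p))) := h4.comp hinv
  have h6 : Tendsto (fun K : ℕ => (K : ℝ) * Real.log (h ((K : ℝ)⁻¹)))
      atTop (nhds (-(a * p))) := by
    apply h5.congr'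
    filter_upwards [eventually_ge_atTop 1] with K hK
    have hK0 : (K : ℝ) ≠ 0 := Nat.cast_ne_zero.mpr (by omega)
    rw [slope_def_field]
    rw [hh0, Real.log_one]
    field_simp
    ring
  -- Step 3: exponentiate and combine with exp(-c/K) → 1.
  have h7 : Tendsto (fun K : ℕ => Real.exp ((K : ℝ) * Real.log (h ((K : ℝ)⁻¹))))
      atTop (nhds (Real.exp (-(a * p)))) := (Real.continuous_exp.tendsto _).comp h6
  have h8 : Tendsto (fun K : ℕ => (h ((K : ℝ)⁻¹)) ^ K)
      atTop (nhds (Real.exp (-(a * p)))) := by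
    apply h7.congr'
    filter_upwards [eventually_ge_atTop 1] with K hK
    rw [Real.exp_nat_mul, Real.exp_log (hpos _)]
  have h9 : Tendsto (fun K : ℕ => Real.exp (-c / K)) atTop (nhds 1) := by
    have : Tendsto (fun K : ℕ => -c / (K : ℝ)) atTop (nhds 0) := by
      simpa [div_eq_mul_inv] using
        (tendsto_inv_atTop_nhds_zero_nat.const_mul (-c))
    simpa [Function.comp_def] using (Real.continuous_exp.tendsto 0).comp this
  have h10 : Tendsto (fun K : ℕ => Real.exp (-c / K) * (h ((K : ℝ)⁻¹)) ^ K)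
      atTop (nhds (Real.exp (-(a * p)))) := by
    simpa using h9.mul h8
  apply h10.congr'
  filter_upwards [eventually_ge_atTop 1] with K hK
  exact (hsum K hK).symm
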